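/- For q-pebbling on the path P_n with vertices 1,...,n (each move removes q ≥ 2 pebbles from a vertex and places one on an adjacent vertex), a configuration D is i-solvable if and only if sum_{j>i} D(j)/q^{j-i} ≥ 1, or sum_{j<i} D(j)/q^{i-j} ≥ 1, or D(i) ≥ 1. -/

import Mathlib

/-- A `q`-pebbling move: remove `q` pebbles from a vertex `u` (which has at least `q`
pebbles) and add one pebble to a neighbour `u'`. -/
def PebStep {V : Type*} [DecidableEq V] (q : ℕ) (G : SimpleGraph V) (D D' : V → ℕ) : Prop :=
  ∃ u u', G.Adj u u' ∧ q ≤ D u ∧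
    D' = fun w => if w = u then D u - q else if w = u' then D u' + 1 else D w

/-- A configuration `D` is `v`-solvable if a finite sequence of `q`-pebbling moves
places a pebble on `v`. -/
def Solvable {V : Type*} [DecidableEq V] (q : ℕ) (G : SimpleGraph V) (D : V → ℕ) (v : V) : Prop :=
  ∃ D', Relation.ReflTransGen (PebStep q G) D D' ∧ 1 ≤ D' v

/-- `m` successive moves of `q` pebbles each from `u` to its neighbour `u'`. -/
lemma move_many {V : Type*} [DecidableEq V] (q : ℕ) (G : SimpleGraph V) (u u' : V)
    (h : G.Adj u u') : ∀ (m : ℕ) (D : V → ℕ), m * q ≤ D u →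
    Relation.ReflTransGen (PebStep q G) D
      (fun w => if w = u then D u - m * q else if w = u' then D u' + m else D w) := by
  intro m
  induction m with
  | zero =>
    intro D _
    have : (fun w => if w = u then D u - 0 * q else if w = u' then D u' + 0 else D w) = D := by
      funext w; split <;> simp_all
    rw [this]
  | succ m ih =>
    intro D hD
    have hne := h.ne
    have h1 : q ≤ D u := le_trans (by nlinarith) hD
    set D1 : V → ℕ := fun w => if w = u then D u - q else if w = u' then D u' + 1 else D w with hD1
    have step1 : PebStep q G D D1 := ⟨u, u', h, h1, rfl⟩
    rw [Nat.succ_mul] at hD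
    have h2 : m * q ≤ D1 u := by
      simp only [hD1, if_pos rfl]
      omega
    have := ih D1 h2
    have heq : (fun w => if w = u then D1 u - m * q else if w = u' then D1 u' + m else D1 w)
        = (fun w => if w = u then D u - (m+1) * q else if w = u' then D u' + (m+1) else D w) := by
      funext w
      by_cases hw : w = u
      · subst hw
        simp [hD1, Nat.succ_mul, hne]
        omega
      · by_cases hw' : w = u'
        · subst hw'
          simp [hD1, Ne.symm hne]
          omega
        · simp only [if_neg hw, if_neg hw', hD1]
    exact Relation.ReflTransGen.head step1 (heq ▸ this)

lemma rtg_back {α : Type*} {r : α → α → Prop} {P : α → Prop}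
    (hstep : ∀ x y, r x y → P y → P x) {a b : α}
    (h : Relation.ReflTransGen r a b) (hb : P b) : P a := by
  induction h with
  | refl => exact hb
  | tail _ hbc ih => exact ih (hstep _ _ hbc hb)

lemma wsum_mono {V : Type*} [Fintype V] [DecidableEq V] (q : ℕ) (c : V → ℝ)
    (hc : ∀ j, 0 ≤ c j) (D : V → ℕ) (u u' : V) (hne : u ≠ u')
    (hcu : c u' ≤ q * c u) (hDu : q ≤ D u) :
    ∑ j, ((if j = u then D u - q else if j = u' then D u' + 1 else D j : ℕ) : ℝ) * c j
      ≤ ∑ j, (D j : ℝ) * c j := by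
  have key : ∀ j, ((if j = u then D u - q else if j = u' then D u' + 1 else D j : ℕ) : ℝ) * c j
      = (D j : ℝ) * c j + ((if j = u then -(q:ℝ) * c u else 0) + (if j = u' then c u' else 0)) := by
    intro j
    by_cases hj : j = u
    · subst hj
      simp only [if_pos rfl, if_neg hne]
      push_cast [hDu]
      ring
    · by_cases hj' : j = u'
      · subst hj'
        simp only [if_neg hj, if_pos rfl]
        push_cast
        ring
      · simp [hj, hj']
  rw [Finset.sum_congr rfl (fun j _ => key j), Finset.sum_add_distrib, Finset.sum_add_distrib,
    Finset.sum_ite_eq' Finset.univ u, Finset.sum_ite_eq' Finset.univ u']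
  simp only [Finset.mem_univ, if_pos]
  have hq0 : (0:ℝ) ≤ q * c u - c u' := by linarith
  linarith

lemma inv_pow_step (q : ℕ) (hq : 2 ≤ q) {da db : ℕ} (h : db = da + 1 ∨ da = db + 1) :
    ((q:ℝ)^db)⁻¹ ≤ q * ((q:ℝ)^da)⁻¹ := by
  have hq1 : (1:ℝ) ≤ q := by exact_mod_cast Nat.one_le_of_lt hq
  have hq0 : (0:ℝ) < q := by linarith
  rcases h with h | h
  · subst h
    have h1 : (0:ℝ) < (q:ℝ)^da := by positivity
    rw [pow_succ, mul_inv]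
    have hinv : (q:ℝ)⁻¹ ≤ q := le_trans (inv_le_one_of_one_le₀ hq1) hq1
    have := mul_le_mul_of_nonneg_left hinv (le_of_lt (inv_pos.2 h1))
    nlinarith
  · subst h
    rw [pow_succ, mul_inv, ← mul_assoc]
    have h1 : (0:ℝ) < (q:ℝ)^db := by positivity
    rw [mul_comm (q:ℝ) ((q:ℝ)^db)⁻¹, mul_assoc, mul_inv_cancel₀ (ne_of_gt hq0), mul_one]

lemma filter_sum_eq (n : ℕ) (q : ℕ) (p : Fin n → Prop) [DecidablePred p]
    (e : Fin n → ℕ) (X : Fin n → ℕ) :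
    ∑ j ∈ Finset.univ.filter p, (X j : ℝ) / (q:ℝ) ^ (e j)
      = ∑ j, (X j : ℝ) * (if p j then ((q:ℝ) ^ (e j))⁻¹ else 0) := by
  rw [Finset.sum_filter]
  refine Finset.sum_congr rfl fun j _ => ?_
  by_cases hp : p j <;> simp [hp, div_eq_mul_inv]

lemma forward (n : ℕ) (q : ℕ) (hq : 2 ≤ q) (D : Fin n → ℕ) (i : Fin n)
    (h : Solvable q (SimpleGraph.pathGraph n) D i) :
    (1 ≤ ∑ j ∈ Finset.univ.filter (fun j : Fin n => i < j),
          (D j : ℝ) / (q : ℝ) ^ ((j : ℕ) - (i : ℕ))) ∨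
    (1 ≤ ∑ j ∈ Finset.univ.filter (fun j : Fin n => j < i),
          (D j : ℝ) / (q : ℝ) ^ ((i : ℕ) - (j : ℕ))) ∨
    1 ≤ D i := by
  classical
  obtain ⟨D', hR, hD'⟩ := h
  have hq1 : (1:ℝ) ≤ q := by exact_mod_cast Nat.one_le_of_lt hq
  have hq0 : (0:ℝ) < q := by linarith
  set cgt : Fin n → ℝ := fun j => if i < j then ((q:ℝ) ^ ((j:ℕ) - (i:ℕ)))⁻¹ else 0 with hcgt
  set clt : Fin n → ℝ := fun j => if j < i then ((q:ℝ) ^ ((i:ℕ) - (j:ℕ)))⁻¹ else 0 with hclt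
  have hcgt0 : ∀ j, 0 ≤ cgt j := by
    intro j; rw [hcgt]; dsimp only; split <;> positivity
  have hclt0 : ∀ j, 0 ≤ clt j := by
    intro j; rw [hclt]; dsimp only; split <;> positivity
  set Q : (Fin n → ℕ) → Prop := fun X =>
    (1 ≤ ∑ j, (X j : ℝ) * cgt j) ∨ (1 ≤ ∑ j, (X j : ℝ) * clt j) ∨ 1 ≤ X i with hQ
  have key : Q D := by
    refine rtg_back ?_ hR (Or.inr (Or.inr hD'))
    rintro X Y ⟨u, u', hadj, hqu, rfl⟩ hQY
    have hne : u ≠ u' := hadj.ne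
    have hadj' : (u:ℕ) + 1 = u' ∨ (u':ℕ) + 1 = u := (SimpleGraph.pathGraph_adj).1 hadj
    by_cases hui : u = i
    · refine Or.inr (Or.inr ?_)
      rw [← hui]
      omega
    by_cases hu'i : u' = i
    · rw [hu'i] at hadj'
      rcases hadj' with hh | hh
      · -- u + 1 = i, so u < i : left-side single term
        right; left
        have hul : u < i := by
          rw [Fin.lt_iff_val_lt_val]; omega
        have hterm : 1 ≤ (X u : ℝ) * clt u := by
          have : clt u = (q:ℝ)⁻¹ := by
            rw [hclt]; dsimp only
            rw [if_pos hul]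
            congr 1
            have : (i:ℕ) - (u:ℕ) = 1 := by omega
            rw [this, pow_one]
          rw [this, ← div_eq_mul_inv, le_div_iff₀ hq0, one_mul]
          exact_mod_cast hqu
        have hsum : (X u : ℝ) * clt u ≤ ∑ j, (X j : ℝ) * clt j :=
          Finset.single_le_sum (f := fun j => (X j : ℝ) * clt j)
            (fun j _ => mul_nonneg (Nat.cast_nonneg _) (hclt0 j)) (Finset.mem_univ u)
        exact le_trans hterm hsum
      · -- i + 1 = u, so i < u : right-side single term
        left
        have hul : i < u := by rw [Fin.lt_iff_val_lt_val]; omega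
        have hterm : 1 ≤ (X u : ℝ) * cgt u := by
          have : cgt u = (q:ℝ)⁻¹ := by
            rw [hcgt]; dsimp only
            rw [if_pos hul]
            congr 1
            have : (u:ℕ) - (i:ℕ) = 1 := by omega
            rw [this, pow_one]
          rw [this, ← div_eq_mul_inv, le_div_iff₀ hq0, one_mul]
          exact_mod_cast hqu
        have hsum : (X u : ℝ) * cgt u ≤ ∑ j, (X j : ℝ) * cgt j :=
          Finset.single_le_sum (f := fun j => (X j : ℝ) * cgt j)
            (fun j _ => mul_nonneg (Nat.cast_nonneg _) (hcgt0 j)) (Finset.mem_univ u)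
        exact le_trans hterm hsum
    · -- u ≠ i and u' ≠ i
      have hvu : (u:ℕ) ≠ (i:ℕ) := fun hh => hui (Fin.ext hh)
      have hvu' : (u':ℕ) ≠ (i:ℕ) := fun hh => hu'i (Fin.ext hh)
      have hwgt : cgt u' ≤ q * cgt u := by
        rw [hcgt]; dsimp only
        by_cases hu : i < u
        · have hu' : i < u' := by
            rw [Fin.lt_iff_val_lt_val] at hu ⊢
            omega
          rw [if_pos hu, if_pos hu']
          exact inv_pow_step q hq (by rw [Fin.lt_iff_val_lt_val] at hu hu'; omega)
        · have hu2 : ¬ i < u' := by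
            rw [Fin.lt_iff_val_lt_val] at hu ⊢
            omega
          rw [if_neg hu, if_neg hu2, mul_zero]
      have hwlt : clt u' ≤ q * clt u := by
        rw [hclt]; dsimp only
        by_cases hu : u < i
        · have hu' : u' < i := by
            rw [Fin.lt_iff_val_lt_val] at hu ⊢
            omega
          rw [if_pos hu, if_pos hu']
          exact inv_pow_step q hq (by rw [Fin.lt_iff_val_lt_val] at hu hu'; omega)
        · have hu2 : ¬ u' < i := by
            rw [Fin.lt_iff_val_lt_val] at hu ⊢
            omega
          rw [if_neg hu, if_neg hu2, mul_zero]
      rcases hQY with h1 | h2 | h3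
      · exact Or.inl (le_trans h1 (wsum_mono q cgt hcgt0 X u u' hne hwgt hqu))
      · exact Or.inr (Or.inl (le_trans h2 (wsum_mono q clt hclt0 X u u' hne hwlt hqu)))
      · refine Or.inr (Or.inr ?_)
        simpa [if_neg (Ne.symm hui), if_neg (Ne.symm hu'i)] using h3
  rcases key with h1 | h2 | h3
  · left
    rw [filter_sum_eq n q (fun j : Fin n => i < j) (fun j => (j:ℕ) - (i:ℕ)) D]
    exact h1
  · right; left
    rw [filter_sum_eq n q (fun j : Fin n => j < i) (fun j => (i:ℕ) - (j:ℕ)) D]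
    exact h2
  · exact Or.inr (Or.inr h3)

lemma conv_real_nat (n q : ℕ) (hq : 2 ≤ q) (s : Finset (Fin n)) (d : Fin n → ℕ) (M : ℕ)
    (hd : ∀ j ∈ s, d j ≤ M) (D : Fin n → ℕ) :
    (1 ≤ ∑ j ∈ s, (D j : ℝ) / (q:ℝ) ^ (d j)) ↔ q ^ M ≤ ∑ j ∈ s, D j * q ^ (M - d j) := by
  have hqR : (0:ℝ) < q := by
    have : (2:ℝ) ≤ q := by exact_mod_cast hq
    linarith
  have hq0 : (0:ℝ) < (q:ℝ) ^ M := by positivity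
  have key : ((∑ j ∈ s, D j * q ^ (M - d j) : ℕ) : ℝ)
      = (∑ j ∈ s, (D j : ℝ) / (q:ℝ) ^ (d j)) * (q:ℝ) ^ M := by
    push_cast
    rw [Finset.sum_mul]
    refine Finset.sum_congr rfl fun j hj => ?_
    rw [div_mul_eq_mul_div, eq_div_iff (by positivity : ((q:ℝ) ^ (d j)) ≠ 0),
      mul_assoc, ← pow_add]
    congr 2
    have := hd j hj
    omega
  rw [← Nat.cast_le (α := ℝ), Nat.cast_pow, key]
  constructor
  · intro h; nlinarith
  · intro h; nlinarith

lemma solve_right (n q : ℕ) :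
    ∀ (k : ℕ) (t : Fin n), n - t.val ≤ k → ∀ (D : Fin n → ℕ) (m : ℕ),
    m * q ^ (n - 1 - t.val) ≤ ∑ j ∈ Finset.univ.filter (fun j => t < j), D j * q ^ (n - 1 - j.val) →
    ∃ D', Relation.ReflTransGen (PebStep q (SimpleGraph.pathGraph n)) D D' ∧
      D' t = D t + m ∧ ∀ j, j < t → D' j = D j := by
  intro k
  induction k with
  | zero => intro t ht; have := t.isLt; omega
  | succ k ih =>
    intro t ht D m hsum
    by_cases hm : m = 0
    · exact ⟨D, Relation.ReflTransGen.refl, by omega, fun j _ => rfl⟩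
    by_cases hlast : n - 1 ≤ t.val
    · exfalso
      have hempty : Finset.univ.filter (fun j => t < j) = (∅ : Finset (Fin n)) := by
        refine Finset.filter_eq_empty_iff.2 ?_
        intro j _
        have := j.isLt
        rw [Fin.lt_iff_val_lt_val]
        omega
      rw [hempty, Finset.sum_empty] at hsum
      have : n - 1 - t.val = 0 := by omega
      rw [this, pow_zero, mul_one] at hsum
      omega
    · have htn : t.val + 1 < n := by omega
      set t' : Fin n := ⟨t.val + 1, htn⟩ with ht'
      have hadj : (SimpleGraph.pathGraph n).Adj t' t :=
        SimpleGraph.pathGraph_adj.2 (Or.inr rfl)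
      have htt' : t < t' := by rw [Fin.lt_iff_val_lt_val]; simp [ht']
      have hnotmem : t' ∉ Finset.univ.filter (fun j => t' < j) := by simp
      have hsplit : Finset.univ.filter (fun j => t < j)
          = insert t' (Finset.univ.filter (fun j => t' < j)) := by
        ext j
        simp only [Finset.mem_filter, Finset.mem_insert, Finset.mem_univ, true_and,
          Fin.lt_iff_val_lt_val, Fin.ext_iff, ht']
        omega
      set E := q ^ (n - 1 - t'.val) with hE
      set R := ∑ j ∈ Finset.univ.filter (fun j => t' < j), D j * q ^ (n - 1 - j.val) with hR
      have hsum2 : m * (q * E) ≤ D t' * E + R := by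
        rw [hsplit, Finset.sum_insert hnotmem] at hsum
        have hpow : q ^ (n - 1 - t.val) = q * E := by
          rw [hE, ← pow_succ']
          congr 1
          simp only [ht']
          omega
        rw [hpow] at hsum
        exact hsum
      have hsum' : (m * q - D t') * E ≤ R := by
        have h1 : (m * q - D t') * E = m * q * E - D t' * E := Nat.sub_mul _ _ _
        have h2 : m * q * E = m * (q * E) := mul_assoc _ _ _
        omega
      obtain ⟨D₁, hR1, ht'1, hlt1⟩ := ih t' (by simp only [ht']; omega) D (m * q - D t') hsum'
      have hD1t' : m * q ≤ D₁ t' := by rw [ht'1]; omega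
      have hmove := move_many q (SimpleGraph.pathGraph n) t' t hadj m D₁ hD1t'
      have htne : t ≠ t' := ne_of_lt htt'
      refine ⟨_, hR1.trans hmove, ?_, ?_⟩
      · simp only [if_neg htne, if_pos rfl]
        rw [hlt1 t htt']
        simp
      · intro j hj
        have hj1 : j ≠ t' := ne_of_lt (lt_trans hj htt')
        have hj2 : j ≠ t := ne_of_lt hj
        simp only [if_neg hj1, if_neg hj2]
        exact hlt1 j (lt_trans hj htt')

lemma solve_left (n q : ℕ) :
    ∀ (k : ℕ) (t : Fin n), t.val ≤ k → ∀ (D : Fin n → ℕ) (m : ℕ),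
    m * q ^ (t.val) ≤ ∑ j ∈ Finset.univ.filter (fun j => j < t), D j * q ^ (j.val) →
    ∃ D', Relation.ReflTransGen (PebStep q (SimpleGraph.pathGraph n)) D D' ∧
      D' t = D t + m ∧ ∀ j, t < j → D' j = D j := by
  intro k
  induction k with
  | zero =>
    intro t ht D m hsum
    have hempty : Finset.univ.filter (fun j => j < t) = (∅ : Finset (Fin n)) := by
      refine Finset.filter_eq_empty_iff.2 ?_
      intro j _
      rw [Fin.lt_iff_val_lt_val]
      omega
    rw [hempty, Finset.sum_empty] at hsum
    have ht0 : t.val = 0 := by omega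
    rw [ht0, pow_zero, mul_one] at hsum
    have hm : m = 0 := by omega
    subst hm
    exact ⟨D, Relation.ReflTransGen.refl, by omega, fun j _ => rfl⟩
  | succ k ih =>
    intro t ht D m hsum
    by_cases hm : m = 0
    · exact ⟨D, Relation.ReflTransGen.refl, by omega, fun j _ => rfl⟩
    by_cases hfirst : t.val = 0
    · exfalso
      have hempty : Finset.univ.filter (fun j => j < t) = (∅ : Finset (Fin n)) := by
        refine Finset.filter_eq_empty_iff.2 ?_
        intro j _
        rw [Fin.lt_iff_val_lt_val]
        omega
      rw [hempty, Finset.sum_empty, hfirst, pow_zero, mul_one] at hsum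
      omega
    · have htn : t.val - 1 < n := by have := t.isLt; omega
      set t' : Fin n := ⟨t.val - 1, htn⟩ with ht'
      have hvt' : t'.val + 1 = t.val := by simp only [ht']; omega
      have hadj : (SimpleGraph.pathGraph n).Adj t' t :=
        SimpleGraph.pathGraph_adj.2 (Or.inl hvt')
      have htt' : t' < t := by rw [Fin.lt_iff_val_lt_val]; omega
      have hnotmem : t' ∉ Finset.univ.filter (fun j => j < t') := by simp
      have hsplit : Finset.univ.filter (fun j => j < t)
          = insert t' (Finset.univ.filter (fun j => j < t')) := by
        ext j
        simp only [Finset.mem_filter, Finset.mem_insert, Finset.mem_univ, true_and,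
          Fin.lt_iff_val_lt_val, Fin.ext_iff, ht']
        omega
      set E := q ^ (t'.val) with hE
      set R := ∑ j ∈ Finset.univ.filter (fun j => j < t'), D j * q ^ (j.val) with hR
      have hsum2 : m * (q * E) ≤ D t' * E + R := by
        rw [hsplit, Finset.sum_insert hnotmem] at hsum
        have hpow : q ^ (t.val) = q * E := by
          rw [hE, ← pow_succ']
          congr 1
          omega
        rw [hpow] at hsum
        exact hsum
      have hsum' : (m * q - D t') * E ≤ R := by
        have h1 : (m * q - D t') * E = m * q * E - D t' * E := Nat.sub_mul _ _ _
        have h2 : m * q * E = m * (q * E) := mul_assoc _ _ _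
        omega
      obtain ⟨D₁, hR1, ht'1, hgt1⟩ := ih t' (by simp only [ht']; omega) D (m * q - D t') hsum'
      have hD1t' : m * q ≤ D₁ t' := by rw [ht'1]; omega
      have hmove := move_many q (SimpleGraph.pathGraph n) t' t hadj m D₁ hD1t'
      have htne : t ≠ t' := ne_of_gt htt'
      refine ⟨_, hR1.trans hmove, ?_, ?_⟩
      · simp only [if_neg htne, if_pos rfl]
        rw [hgt1 t htt']
        simp
      · intro j hj
        have hj1 : j ≠ t' := ne_of_gt (lt_trans htt' hj)
        have hj2 : j ≠ t := ne_of_gt hj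
        simp only [if_neg hj1, if_neg hj2]
        exact hgt1 j (lt_trans htt' hj)

/-- on the path with vertices `0,…,n-1`, a configuration is `i`-solvable
iff enough weighted pebbles lie on one side of `i`, or `i` already has a pebble. -/
theorem stmt6 (n : ℕ) (q : ℕ) (hq : 2 ≤ q) (D : Fin n → ℕ) (i : Fin n) :
    Solvable q (SimpleGraph.pathGraph n) D i ↔
      (1 ≤ ∑ j ∈ Finset.univ.filter (fun j : Fin n => i < j),
            (D j : ℝ) / (q : ℝ) ^ ((j : ℕ) - (i : ℕ))) ∨
      (1 ≤ ∑ j ∈ Finset.univ.filter (fun j : Fin n => j < i),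
            (D j : ℝ) / (q : ℝ) ^ ((i : ℕ) - (j : ℕ))) ∨
      1 ≤ D i := by
  constructor
  · exact forward n q hq D i
  · rintro (h1 | h2 | h3)
    · -- right side
      rw [conv_real_nat n q hq _ _ (n - 1 - i.val)
        (by intro j hj; have := j.isLt; omega) D] at h1
      have h1' : 1 * q ^ (n - 1 - i.val)
          ≤ ∑ j ∈ Finset.univ.filter (fun j : Fin n => i < j), D j * q ^ (n - 1 - j.val) := by
        rw [one_mul]
        refine le_trans h1 (le_of_eq (Finset.sum_congr rfl fun j hj => ?_))
        have hij : i < j := (Finset.mem_filter.1 hj).2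
        have hij' : i.val < j.val := hij
        have := j.isLt
        congr 2
        omega
      obtain ⟨D', hR, hD', _⟩ := solve_right n q n i (by omega) D 1 h1'
      exact ⟨D', hR, by omega⟩
    · -- left side
      rw [conv_real_nat n q hq _ _ (i.val)
        (by intro j hj; omega) D] at h2
      have h2' : 1 * q ^ (i.val)
          ≤ ∑ j ∈ Finset.univ.filter (fun j : Fin n => j < i), D j * q ^ (j.val) := by
        rw [one_mul]
        refine le_trans h2 (le_of_eq (Finset.sum_congr rfl fun j hj => ?_))
        have hij : j < i := (Finset.mem_filter.1 hj).2
        have hij' : j.val < i.val := hij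
        congr 2
        omega
      obtain ⟨D', hR, hD', _⟩ := solve_left n q i.val i (le_refl _) D 1 h2'
      exact ⟨D', hR, by omega⟩
    · exact ⟨D, Relation.ReflTransGen.refl, h3⟩
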